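/- Consider the single-plane lens with three unit point masses at the cube roots of unity ζ_k = e^{2πik/3}, k = 0, 1, 2 (i.e., Einstein radii all equal to 1) and source w = 0. Then the lens equation z − Σ_{k=0}^{2} (z − ζ_k)/|z − ζ_k|² = 0 has exactly 10 solutions in ℂ \ {ζ_0, ζ_1, ζ_2}, and every solution is nondegenerate. -/

import Mathlib

open Complex

namespace ThreeLens
noncomputable section

def ω : ℂ := Complex.exp (2 * Real.pi * Complex.I / 3)

lemma prim : IsPrimitiveRoot ω 3 := Complex.isPrimitiveRoot_exp 3 (by norm_num)

lemma hω3 : ω ^ 3 = 1 := prim.pow_eq_one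

lemma hωne0 : ω ≠ 0 := Complex.exp_ne_zero _

lemma hsum : ω ^ 2 + ω + 1 = 0 := by
  have h1 : (ω - 1) * (ω ^ 2 + ω + 1) = 0 := by linear_combination hω3
  rcases mul_eq_zero.1 h1 with h | h
  · exact absurd (sub_eq_zero.1 h) (prim.ne_one (by norm_num))
  · exact h

lemma habs1 {v : ℂ} (hv : v ^ 3 = 1) : ‖v‖ = 1 := by
  have h3 : ‖v‖ ^ 3 = 1 := by
    rw [← norm_pow, hv, norm_one]
  nlinarith [norm_nonneg v, sq_nonneg (‖v‖ - 1), sq_nonneg (‖v‖ + 1)]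

lemma hnsq1 {v : ℂ} (hv : v ^ 3 = 1) : v * (starRingEnd ℂ) v = 1 := by
  rw [Complex.mul_conj]
  norm_cast
  rw [← Complex.sq_norm, habs1 hv]
  norm_num

lemma hconj_cube {v : ℂ} (hv : v ^ 3 = 1) : (starRingEnd ℂ) v = v ^ 2 := by
  have hv0 : v ≠ 0 := by
    intro h; rw [h] at hv; simp at hv
  have h2 : v * v ^ 2 = 1 := by linear_combination hv
  exact mul_left_cancel₀ hv0 ((hnsq1 hv).trans h2.symm)

lemma hconj : (starRingEnd ℂ) ω = ω ^ 2 := hconj_cube hω3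

lemma hfac (v : ℂ) : (v - 1) * (v - ω) * (v - ω ^ 2) = v ^ 3 - 1 := by
  linear_combination (v - v ^ 2) * hsum + (v - 1) * hω3

lemma cube_eq {v : ℂ} (hv : v ^ 3 = 1) : v = 1 ∨ v = ω ∨ v = ω ^ 2 := by
  have h1 : (v - 1) * (v - ω) * (v - ω ^ 2) = 0 := by rw [hfac, hv, sub_self]
  rcases mul_eq_zero.1 h1 with h | h
  · rcases mul_eq_zero.1 h with h | h
    · exact Or.inl (sub_eq_zero.1 h)
    · exact Or.inr (Or.inl (sub_eq_zero.1 h))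
  · exact Or.inr (Or.inr (sub_eq_zero.1 h))

lemma inv_sum_eq {u1 u2 u3 : ℂ} (h1 : u1 ≠ 0) (h2 : u2 ≠ 0) (h3 : u3 ≠ 0) :
    u1⁻¹ + u2⁻¹ + u3⁻¹ = (u2 * u3 + u1 * u3 + u1 * u2) / (u1 * u2 * u3) := by
  field_simp

lemma inv_sq_sum_eq {u1 u2 u3 : ℂ} (h1 : u1 ≠ 0) (h2 : u2 ≠ 0) (h3 : u3 ≠ 0) :
    u1⁻¹ ^ 2 + u2⁻¹ ^ 2 + u3⁻¹ ^ 2 =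
      ((u2 * u3) ^ 2 + (u1 * u3) ^ 2 + (u1 * u2) ^ 2) / (u1 * u2 * u3) ^ 2 := by
  field_simp

lemma term_eq {w : ℂ} (hw : w ≠ 0) :
    w / ((‖w‖ : ℂ)) ^ 2 = ((starRingEnd ℂ) w)⁻¹ := by
  have h1 : ((‖w‖ : ℂ)) ^ 2 = w * (starRingEnd ℂ) w := by
    rw [← Complex.ofReal_pow, Complex.sq_norm, Complex.mul_conj]
  rw [h1, div_mul_eq_div_div, div_self hw, one_div]

def lensCLE (c : ℂ) (hc : 1 - Complex.normSq c ≠ 0) : ℂ ≃L[ℝ] ℂ :=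
  LinearEquiv.toContinuousLinearEquiv
  { toFun := fun h => h - c * (starRingEnd ℂ) h
    invFun := fun k => ((1 - Complex.normSq c)⁻¹ : ℝ) • (k + c * (starRingEnd ℂ) k)
    map_add' := by intros; simp [map_add]; ring
    map_smul' := by intros r h; simp [Complex.real_smul]; ring
    left_inv := by
      intro h
      have hc' : 1 - (c.re * c.re + c.im * c.im) ≠ 0 := by
        rwa [← Complex.normSq_apply]
      have hc'' : 1 - c.re ^ 2 - c.im ^ 2 ≠ 0 := by
        intro hh; apply hc'; linear_combination hh
      apply Complex.ext <;>
        simp [Complex.normSq_apply, Complex.sub_re, Complex.sub_im, Complex.add_re,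
          Complex.add_im, Complex.mul_re, Complex.mul_im, Complex.smul_re, Complex.smul_im]
      · linear_combination (h.re) * (mul_inv_cancel₀ hc'')
      · linear_combination (h.im) * (mul_inv_cancel₀ hc'')
    right_inv := by
      intro k
      have hc' : 1 - (c.re * c.re + c.im * c.im) ≠ 0 := by
        rwa [← Complex.normSq_apply]
      have hc'' : 1 - c.re ^ 2 - c.im ^ 2 ≠ 0 := by
        intro hh; apply hc'; linear_combination hh
      apply Complex.ext <;>
        simp [Complex.normSq_apply, Complex.sub_re, Complex.sub_im, Complex.add_re,
          Complex.add_im, Complex.mul_re, Complex.mul_im, Complex.smul_re, Complex.smul_im]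
      · linear_combination (k.re) * (mul_inv_cancel₀ hc'')
      · linear_combination (k.im) * (mul_inv_cancel₀ hc'') }

lemma lensCLE_apply (c : ℂ) (hc : 1 - Complex.normSq c ≠ 0) (h : ℂ) :
    (lensCLE c hc : ℂ →L[ℝ] ℂ) h = h - c * (starRingEnd ℂ) h := rfl
def conjCLM : ℂ →L[ℝ] ℂ := Complex.conjCLE.toContinuousLinearMap

@[simp] lemma conjCLM_apply (z : ℂ) : conjCLM z = (starRingEnd ℂ) z := rfl

lemma hasFDerivAt_invconj (a z : ℂ) (h : z ≠ a) :
    HasFDerivAt (fun y : ℂ => ((starRingEnd ℂ) (y - a))⁻¹)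
      ((-(((starRingEnd ℂ) (z - a)) ^ 2)⁻¹) • conjCLM) z := by
  have hza : (starRingEnd ℂ) (z - a) ≠ 0 := fun hh =>
    sub_ne_zero.2 h (by simpa using congrArg (starRingEnd ℂ) hh)
  have h1 : HasFDerivAt (fun y : ℂ => (starRingEnd ℂ) (y - a)) conjCLM z := by
    have h2 : HasFDerivAt (fun y : ℂ => y - a) (ContinuousLinearMap.id ℝ ℂ) z :=
      (hasFDerivAt_id z).sub_const a
    have h3 := (Complex.conjCLE.toContinuousLinearMap.hasFDerivAt
      (x := z - a)).comp z h2
    rw [ContinuousLinearMap.comp_id] at h3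
    exact h3
  have h4 : HasFDerivAt (fun w : ℂ => w⁻¹)
      (((-(((starRingEnd ℂ) (z - a)) ^ 2)⁻¹ : ℂ) • (1 : ℂ →L[ℂ] ℂ)).restrictScalars ℝ)
      ((starRingEnd ℂ) (z - a)) := by
    have h5 := (hasDerivAt_inv hza).hasFDerivAt
    have h6 := h5.restrictScalars ℝ
    refine h6.congr_fderiv ?_
    ext w
    simp [ContinuousLinearMap.smulRight]
    ring
  have h7 := h4.comp z h1
  refine h7.congr_fderiv ?_
  ext w
  simp [conjCLM]
lemma sum_hasFDerivAt (z c : ℂ) (h0 : z ≠ 1) (h1 : z ≠ ω) (h2 : z ≠ ω ^ 2)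
    (hc : 1 - Complex.normSq c ≠ 0)
    (hceq : c = -(((starRingEnd ℂ) (z - 1)) ^ 2)⁻¹
      - (((starRingEnd ℂ) (z - ω)) ^ 2)⁻¹ - (((starRingEnd ℂ) (z - ω ^ 2)) ^ 2)⁻¹) :
    HasFDerivAt (fun y : ℂ => y - (((starRingEnd ℂ) (y - 1))⁻¹
        + ((starRingEnd ℂ) (y - ω))⁻¹ + ((starRingEnd ℂ) (y - ω ^ 2))⁻¹))
      ((lensCLE c hc : ℂ →L[ℝ] ℂ)) z := by
  have d1 := hasFDerivAt_invconj 1 z h0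
  have d2 := hasFDerivAt_invconj ω z h1
  have d3 := hasFDerivAt_invconj (ω ^ 2) z h2
  have hφ := (hasFDerivAt_id z).sub ((d1.add d2).add d3)
  refine hφ.congr_fderiv ?_
  ext w
  simp only [lensCLE_apply, ContinuousLinearMap.sub_apply, ContinuousLinearMap.add_apply,
    ContinuousLinearMap.id_apply, ContinuousLinearMap.smul_apply, conjCLM_apply,
    smul_eq_mul]
  rw [hceq]
  ring
lemma exists_root_incr (lo hi : ℝ) (h : lo ≤ hi) (hlo : lo ^ 3 - 3 * lo - 1 ≤ 0)
    (hhi : 0 ≤ hi ^ 3 - 3 * hi - 1) : ∃ x, lo ≤ x ∧ x ≤ hi ∧ x ^ 3 = 3 * x + 1 := by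
  have hcont : ContinuousOn (fun x : ℝ => x ^ 3 - 3 * x - 1) (Set.Icc lo hi) := by fun_prop
  have := intermediate_value_Icc h hcont (show (0:ℝ) ∈ Set.Icc _ _ from ⟨hlo, hhi⟩)
  obtain ⟨x, hx, hx0⟩ := this
  exact ⟨x, hx.1, hx.2, by simp only [] at hx0; linarith⟩

lemma exists_root_decr (lo hi : ℝ) (h : lo ≤ hi) (hlo : 0 ≤ lo ^ 3 - 3 * lo - 1)
    (hhi : hi ^ 3 - 3 * hi - 1 ≤ 0) : ∃ x, lo ≤ x ∧ x ≤ hi ∧ x ^ 3 = 3 * x + 1 := by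
  have hcont : ContinuousOn (fun x : ℝ => x ^ 3 - 3 * x - 1) (Set.Icc lo hi) := by fun_prop
  have := intermediate_value_Icc' h hcont (show (0:ℝ) ∈ Set.Icc _ _ from ⟨hhi, hlo⟩)
  obtain ⟨x, hx, hx0⟩ := this
  exact ⟨x, hx.1, hx.2, by simp only [] at hx0; linarith⟩

lemma cubic_roots {a b c : ℝ} (ha : a ^ 3 = 3 * a + 1) (hb : b ^ 3 = 3 * b + 1)
    (hc : c ^ 3 = 3 * c + 1) (hab : a ≠ b) (hac : a ≠ c) (hbc : b ≠ c)
    {y : ℂ} (hy : y ^ 3 = 3 * y + 1) : y = a ∨ y = b ∨ y = c := by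
  have ha' : (a : ℂ) ^ 3 = 3 * a + 1 := by exact_mod_cast congrArg (fun t : ℝ => (t : ℂ)) ha
  have hb' : (b : ℂ) ^ 3 = 3 * b + 1 := by exact_mod_cast congrArg (fun t : ℝ => (t : ℂ)) hb
  have hc' : (c : ℂ) ^ 3 = 3 * c + 1 := by exact_mod_cast congrArg (fun t : ℝ => (t : ℂ)) hc
  by_cases h1 : y = a
  · exact Or.inl h1
  by_cases h2 : y = b
  · exact Or.inr (Or.inl h2)
  by_cases h3 : y = c
  · exact Or.inr (Or.inr h3)
  exfalso
  have qa : y ^ 2 + a * y + a ^ 2 - 3 = 0 := by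
    have := sub_ne_zero.2 h1
    have hfa : (y - a) * (y ^ 2 + a * y + a ^ 2 - 3) = 0 := by linear_combination hy - ha'
    rcases mul_eq_zero.1 hfa with h | h
    · exact absurd h this
    · exact h
  have qb : y ^ 2 + b * y + b ^ 2 - 3 = 0 := by
    have := sub_ne_zero.2 h2
    have hfb : (y - b) * (y ^ 2 + b * y + b ^ 2 - 3) = 0 := by linear_combination hy - hb'
    rcases mul_eq_zero.1 hfb with h | h
    · exact absurd h this
    · exact h
  have qc : y ^ 2 + c * y + c ^ 2 - 3 = 0 := by
    have := sub_ne_zero.2 h3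
    have hfc : (y - c) * (y ^ 2 + c * y + c ^ 2 - 3) = 0 := by linear_combination hy - hc'
    rcases mul_eq_zero.1 hfc with h | h
    · exact absurd h this
    · exact h
  have hab' : (a : ℂ) - b ≠ 0 := sub_ne_zero.2 (by exact_mod_cast hab)
  have hac' : (a : ℂ) - c ≠ 0 := sub_ne_zero.2 (by exact_mod_cast hac)
  have e1 : ((a : ℂ) - b) * (y + a + b) = 0 := by linear_combination qa - qb
  have e2 : ((a : ℂ) - c) * (y + a + c) = 0 := by linear_combination qa - qc
  have f1 : y = -(a : ℂ) - b := by
    rcases mul_eq_zero.1 e1 with h | h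
    · exact absurd h hab'
    · linear_combination h
  have f2 : y = -(a : ℂ) - c := by
    rcases mul_eq_zero.1 e2 with h | h
    · exact absurd h hac'
    · linear_combination h
  have : (b : ℂ) = c := by rw [f1] at f2; linear_combination -f2
  exact hbc (by exact_mod_cast this)
lemma ne_of_abs_ne {p q : ℂ} (h : ‖p‖ ≠ ‖q‖) : p ≠ q :=
  fun hh => h (by rw [hh])

section pointlemmas

variable (u : ℂ) (x : ℝ)

lemma abs_ux (hu3 : u ^ 3 = 1) : ‖u * (x : ℂ)‖ = |x| := by
  rw [norm_mul, habs1 hu3, one_mul, Complex.norm_real, Real.norm_eq_abs]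

lemma ux_ne (hu3 : u ^ 3 = 1) (hx1 : |x| ≠ 1) {q : ℂ} (hq : q ^ 3 = 1) : u * x ≠ q :=
  ne_of_abs_ne (by rw [abs_ux u x hu3, habs1 hq]; exact hx1)

variable (hu3 : u ^ 3 = 1) (hx3 : (x : ℂ) ^ 3 = 3 * x + 1) (hx0 : x ≠ 0) (hx1 : |x| ≠ 1)

lemma w_ne (hu3 : u ^ 3 = 1) (hx1 : |x| ≠ 1) {q : ℂ} (hq : q ^ 3 = 1) : u ^ 2 * x ≠ q := by
  have h : (u ^ 2) ^ 3 = 1 := by linear_combination (u ^ 3 + 1) * hu3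
  exact ux_ne (u ^ 2) x h hx1 hq

include hu3 hx3 hx0 hx1 in
lemma sol_val : (u * x : ℂ) - (((u ^ 2 * x - 1))⁻¹ + ((u ^ 2 * x - ω ^ 2))⁻¹ + ((u ^ 2 * x - ω))⁻¹) = 0 := by
  set w : ℂ := u ^ 2 * x with hw
  have h1 : w - 1 ≠ 0 := sub_ne_zero.2 (w_ne u x hu3 hx1 (one_pow 3))
  have h2 : w - ω ^ 2 ≠ 0 := sub_ne_zero.2 (w_ne u x hu3 hx1 (by linear_combination (ω ^ 3 + 1) * hω3))
  have h3 : w - ω ≠ 0 := sub_ne_zero.2 (w_ne u x hu3 hx1 hω3)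
  rw [inv_sum_eq h1 h2 h3]
  have hd' : (w - 1) * (w - ω ^ 2) * (w - ω) = w ^ 3 - 1 := by
    linear_combination (w - w ^ 2) * hsum + (w - 1) * hω3
  have hzD : u * x * (w ^ 3 - 1) = 3 * w ^ 2 := by
    rw [hw]
    linear_combination (u * x) * hx3 + (u ^ 4 * (x : ℂ) ^ 4 + u * (x : ℂ) ^ 4 - 3 * u * (x : ℂ) ^ 2) * hu3
  have hN : (w - ω ^ 2) * (w - ω) + (w - 1) * (w - ω) + (w - 1) * (w - ω ^ 2) = 3 * w ^ 2 := by
    linear_combination (-2 * w + 1) * hsum + hω3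
  have hD : (w - 1) * (w - ω ^ 2) * (w - ω) ≠ 0 := mul_ne_zero (mul_ne_zero h1 h2) h3
  rw [sub_eq_zero, eq_comm, div_eq_iff hD]
  linear_combination hN - hzD - (u * x) * hd'

include hu3 hx3 hx0 hx1 in
lemma c_val : (((u ^ 2 * x - 1)) ^ 2)⁻¹ + (((u ^ 2 * x - ω ^ 2)) ^ 2)⁻¹ + (((u ^ 2 * x - ω)) ^ 2)⁻¹
    = u ^ 2 * ((x : ℂ) ^ 2 - 2) := by
  set w : ℂ := u ^ 2 * x with hw
  have h1 : w - 1 ≠ 0 := sub_ne_zero.2 (w_ne u x hu3 hx1 (one_pow 3))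
  have h2 : w - ω ^ 2 ≠ 0 := sub_ne_zero.2 (w_ne u x hu3 hx1 (by linear_combination (ω ^ 3 + 1) * hω3))
  have h3 : w - ω ≠ 0 := sub_ne_zero.2 (w_ne u x hu3 hx1 hω3)
  have hD : (w - 1) * (w - ω ^ 2) * (w - ω) ≠ 0 := mul_ne_zero (mul_ne_zero h1 h2) h3
  have hd' : (w - 1) * (w - ω ^ 2) * (w - ω) = w ^ 3 - 1 := by
    linear_combination (w - w ^ 2) * hsum + (w - 1) * hω3
  have hw3' : w ^ 3 - 1 = 3 * (x : ℂ) := by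
    rw [hw]
    linear_combination ((x : ℂ) ^ 3 + u ^ 3 * (x : ℂ) ^ 3) * hu3 + hx3
  have hDen : ((w - 1) * (w - ω ^ 2) * (w - ω)) ^ 2 = 9 * (x : ℂ) ^ 2 := by
    rw [hd', hw3']; ring
  have hNum : ((w - ω ^ 2) * (w - ω)) ^ 2 + ((w - 1) * (w - ω)) ^ 2 + ((w - 1) * (w - ω ^ 2)) ^ 2
      = 9 * u ^ 2 * (x : ℂ) ^ 2 * ((x : ℂ) ^ 2 - 2) := by
    rw [hw]
    linear_combination (-6 * u ^ 2 * (x : ℂ) + 2 * u ^ 4 * (x : ℂ) ^ 2 - 4 * u ^ 6 * (x : ℂ) ^ 3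
        + 4 * ω * u ^ 2 * (x : ℂ) + 2 * ω * u ^ 4 * (x : ℂ) ^ 2 + ω ^ 2
        - 2 * ω ^ 2 * u ^ 2 * (x : ℂ) + 2 * ω ^ 2 * u ^ 4 * (x : ℂ) ^ 2 - ω ^ 3
        - 2 * ω ^ 3 * u ^ 2 * (x : ℂ) + ω ^ 4) * hsum
      + (3 * u ^ 2 * (x : ℂ) ^ 4 + 3 * u ^ 5 * (x : ℂ) ^ 4) * hu3
      + (-6 * u ^ 2 * (x : ℂ)) * hx3
  simp only [← inv_pow]
  rw [inv_sq_sum_eq h1 h2 h3, div_eq_iff (pow_ne_zero 2 hD), hDen]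
  linear_combination hNum

end pointlemmas
lemma root_facts {x : ℝ} (hx3 : x ^ 3 = 3 * x + 1) :
    x ≠ 0 ∧ |x| ≠ 1 ∧ (x ^ 2 - 2) ^ 2 ≠ 1 := by
  refine ⟨?_, ?_, ?_⟩
  · intro h; rw [h] at hx3; norm_num at hx3
  · intro h
    rcases (abs_eq (by norm_num : (0:ℝ) ≤ 1)).1 h with h | h <;> rw [h] at hx3 <;> norm_num at hx3
  · intro h
    have h2 : (x ^ 2 - 1) * (x ^ 2 - 3) = 0 := by linear_combination h
    rcases mul_eq_zero.1 h2 with h | h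
    · have hx2 : x ^ 2 = 1 := by linarith
      nlinarith [hx3, hx2]
    · have hx2 : x ^ 2 = 3 := by linarith
      nlinarith [hx3, hx2]

lemma hconj2 : (starRingEnd ℂ) (ω ^ 2) = ω := by
  rw [map_pow, hconj]
  linear_combination ω * hω3

lemma sol0 : (0 : ℂ) - (((starRingEnd ℂ) (0 - 1))⁻¹ + ((starRingEnd ℂ) (0 - ω))⁻¹
    + ((starRingEnd ℂ) (0 - ω ^ 2))⁻¹) = 0 := by
  simp only [zero_sub, map_neg, map_one, hconj, hconj2]
  have i1 : (-1 : ℂ)⁻¹ = -1 := by norm_num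
  have i2 : (-ω ^ 2 : ℂ)⁻¹ = -ω := inv_eq_of_mul_eq_one_right (by linear_combination hω3)
  have i3 : (-ω : ℂ)⁻¹ = -ω ^ 2 := inv_eq_of_mul_eq_one_right (by linear_combination hω3)
  rw [i1, i2, i3]
  linear_combination hsum

lemma c0 : (((starRingEnd ℂ) ((0:ℂ) - 1)) ^ 2)⁻¹ + (((starRingEnd ℂ) ((0:ℂ) - ω)) ^ 2)⁻¹
    + (((starRingEnd ℂ) ((0:ℂ) - ω ^ 2)) ^ 2)⁻¹ = 0 := by
  simp only [zero_sub, map_neg, map_one, hconj, hconj2]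
  have i1 : (((-1 : ℂ)) ^ 2)⁻¹ = 1 := by norm_num
  have i2 : (((-ω ^ 2 : ℂ)) ^ 2)⁻¹ = ω ^ 2 := inv_eq_of_mul_eq_one_right
    (by linear_combination (ω ^ 3 + 1) * hω3)
  have i3 : (((-ω : ℂ)) ^ 2)⁻¹ = ω := inv_eq_of_mul_eq_one_right (by linear_combination hω3)
  rw [i1, i2, i3]
  linear_combination hsum

lemma backward {z : ℂ} (h1 : z ≠ 1) (h2 : z ≠ ω) (h3 : z ≠ ω ^ 2) (hz0 : z ≠ 0)
    (hfz : z - (((starRingEnd ℂ) (z - 1))⁻¹ + ((starRingEnd ℂ) (z - ω))⁻¹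
      + ((starRingEnd ℂ) (z - ω ^ 2))⁻¹) = 0) :
    ∃ v y : ℂ, v ^ 3 = 1 ∧ y ^ 3 = 3 * y + 1 ∧ z = v ^ 2 * y := by
  set w : ℂ := (starRingEnd ℂ) z with hwdef
  have hcw : (starRingEnd ℂ) w = z := Complex.conj_conj z
  have e1 : (starRingEnd ℂ) (z - 1) = w - 1 := by rw [map_sub, map_one]
  have e2 : (starRingEnd ℂ) (z - ω) = w - ω ^ 2 := by rw [map_sub, hconj]
  have e3 : (starRingEnd ℂ) (z - ω ^ 2) = w - ω := by rw [map_sub, hconj2]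
  rw [e1, e2, e3] at hfz
  have hw1 : w - 1 ≠ 0 := by
    rw [sub_ne_zero]
    intro h; apply h1
    rw [← hcw, h, map_one]
  have hw2 : w - ω ^ 2 ≠ 0 := by
    rw [sub_ne_zero]
    intro h; apply h2
    rw [← hcw, h, hconj2]
  have hw3' : w - ω ≠ 0 := by
    rw [sub_ne_zero]
    intro h; apply h3
    rw [← hcw, h, hconj]
  rw [inv_sum_eq hw1 hw2 hw3', sub_eq_zero] at hfz
  have hD : (w - 1) * (w - ω ^ 2) * (w - ω) ≠ 0 := mul_ne_zero (mul_ne_zero hw1 hw2) hw3'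
  rw [eq_div_iff hD] at hfz
  have hz1 : z * (w ^ 3 - 1) = 3 * w ^ 2 := by
    linear_combination hfz + (z * w ^ 2 - z * w - 2 * w + 1) * hsum + (-z * w + z + 1) * hω3
  have hz2 : w * (z ^ 3 - 1) = 3 * z ^ 2 := by
    have h := congrArg (starRingEnd ℂ) hz1
    simp only [map_mul, map_sub, map_pow, map_one, map_ofNat, hcw, ← hwdef] at h
    exact h
  have hpoly : z * ((z ^ 3 - 1) ^ 3 - 27 * z ^ 3) = 0 := by
    linear_combination (z * (w ^ 2 * (z ^ 3 - 1) ^ 2 + 3 * z ^ 2 * w * (z ^ 3 - 1) + 9 * z ^ 4)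
      - 3 * (z ^ 3 - 1) * (w * (z ^ 3 - 1) + 3 * z ^ 2)) * hz2 - (z ^ 3 - 1) ^ 3 * hz1
  have hcube : (z ^ 3 - 1) ^ 3 = 27 * z ^ 3 := by
    rcases mul_eq_zero.1 hpoly with h | h
    · exact absurd h hz0
    · linear_combination h
  set v : ℂ := (z ^ 3 - 1) / (3 * z) with hvdef
  have h3z : (3 : ℂ) * z ≠ 0 := by simpa using hz0
  have hvz : z ^ 3 - 1 = 3 * z * v := by
    rw [hvdef, mul_div_cancel₀ _ h3z]
  have h5 : 27 * z ^ 3 * (v ^ 3 - 1) = 0 := by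
    linear_combination hcube - ((z ^ 3 - 1) ^ 2 + (z ^ 3 - 1) * (3 * z * v) + (3 * z * v) ^ 2) * hvz
  have hv3 : v ^ 3 = 1 := by
    rcases mul_eq_zero.1 h5 with h | h
    · exact absurd h (by simpa using pow_ne_zero 3 hz0)
    · linear_combination h
  refine ⟨v, v * z, hv3, ?_, ?_⟩
  · linear_combination z ^ 3 * hv3 + hvz
  · linear_combination (-z) * hv3
end
end ThreeLens

open ThreeLens Complex

/-- The single-plane lens with three unit point masses at the cube roots of unity
and source `w = 0` produces exactly `10` lensed images, all nondegenerate. -/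
theorem three_mass_lens_ten_images :
    let ζ : Fin 3 → ℂ := fun k => Complex.exp (2 * Real.pi * Complex.I * (k : ℕ) / 3)
    let f : ℂ → ℂ := fun z =>
      z - ∑ k : Fin 3, (z - ζ k) / (‖z - ζ k‖ : ℂ) ^ 2
    let S : Set ℂ := {z : ℂ | (∀ k, z ≠ ζ k) ∧ f z = 0}
    S.Finite ∧ S.ncard = 10 ∧
      ∀ z ∈ S, ∃ L : ℂ ≃L[ℝ] ℂ, HasFDerivAt f (L : ℂ →L[ℝ] ℂ) z := by
  intro ζ f S
  -- the three real roots
  obtain ⟨a, ha_lo, ha_hi, ha3⟩ := exists_root_incr (-1.6) (-1.5) (by norm_num) (by norm_num) (by norm_num)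
  obtain ⟨b, hb_lo, hb_hi, hb3⟩ := exists_root_decr (-0.4) 0 (by norm_num) (by norm_num) (by norm_num)
  obtain ⟨c, hc_lo, hc_hi, hc3⟩ := exists_root_incr 1.8 1.9 (by norm_num) (by norm_num) (by norm_num)
  have hab : a ≠ b := by intro h; rw [h] at ha_hi; linarith
  have hac : a ≠ c := by intro h; rw [h] at ha_hi; linarith
  have hbc : b ≠ c := by intro h; rw [h] at hb_hi; linarith
  set r : Fin 3 → ℝ := ![a, b, c] with hrdef
  have hr3 : ∀ i, (r i) ^ 3 = 3 * r i + 1 := by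
    intro i; fin_cases i <;> simpa [hrdef]
  have hrf := fun i => root_facts (hr3 i)
  have hr3C : ∀ i, ((r i : ℝ) : ℂ) ^ 3 = 3 * ((r i : ℝ) : ℂ) + 1 := by
    intro i; exact_mod_cast congrArg (fun t : ℝ => (t : ℂ)) (hr3 i)
  have habs_d : ∀ i j : Fin 3, |r i| = |r j| → i = j := by
    have h1 : |a| ≤ 1.6 := by rw [abs_of_neg (by linarith)]; linarith
    have h2 : 1.5 ≤ |a| := by rw [abs_of_neg (by linarith)]; linarith
    have h3 : |b| ≤ 0.4 := by rw [abs_of_nonpos (by linarith)]; linarith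
    have h4 : 1.8 ≤ |c| := by rw [_root_.abs_of_nonneg (by linarith)]; linarith
    have h5 : |c| ≤ 1.9 := by rw [_root_.abs_of_nonneg (by linarith)]; linarith
    intro i j h
    fin_cases i <;> fin_cases j
    · rfl
    · exfalso; have hh : |a| = |b| := h; linarith
    · exfalso; have hh : |a| = |c| := h; linarith
    · exfalso; have hh : |b| = |a| := h; linarith
    · rfl
    · exfalso; have hh : |b| = |c| := h; linarith
    · exfalso; have hh : |c| = |a| := h; linarith
    · exfalso; have hh : |c| = |b| := h; linarith
    · rfl
  have hu3' : ∀ m : Fin 3, (ω ^ (m : ℕ)) ^ 3 = 1 := fun m => by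
    rw [← pow_mul, mul_comm, pow_mul, hω3, one_pow]
  set F : Fin 3 × Fin 3 → ℂ := fun p => ω ^ (p.1 : ℕ) * ((r p.2 : ℝ) : ℂ) with hFdef
  have hFinj : Function.Injective F := by
    rintro ⟨m, i⟩ ⟨m', i'⟩ h
    simp only [hFdef] at h
    have habs_eq : |r i| = |r i'| := by
      have h1 := congrArg norm h
      rwa [abs_ux _ _ (hu3' m), abs_ux _ _ (hu3' m')] at h1
    have h2 : i = i' := habs_d i i' habs_eq
    rw [h2] at h
    have hne : ((r i' : ℝ) : ℂ) ≠ 0 := by exact_mod_cast (hrf i').1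
    have h3 : ω ^ (m : ℕ) = ω ^ (m' : ℕ) := mul_right_cancel₀ hne h
    have h4 : (m : ℕ) = (m' : ℕ) := prim.pow_inj m.isLt m'.isLt h3
    exact Prod.ext (Fin.val_injective h4) h2
  -- ζ values
  have hζω : ∀ k : Fin 3, ζ k = ω ^ (k : ℕ) := by
    intro k
    show Complex.exp _ = _
    rw [ThreeLens.ω, ← Complex.exp_nat_mul]
    congr 1
    ring
  have hζ0 : ζ 0 = 1 := by rw [hζω]; norm_num
  have hζ1 : ζ 1 = ω := by rw [hζω]; norm_num
  have hζ2 : ζ 2 = ω ^ 2 := by rw [hζω, show ((2:Fin 3):ℕ) = 2 from rfl]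
  have hne_iff : ∀ y : ℂ, (∀ k, y ≠ ζ k) ↔ (y ≠ 1 ∧ y ≠ ω ∧ y ≠ ω ^ 2) := by
    intro y
    constructor
    · intro h; exact ⟨hζ0 ▸ h 0, hζ1 ▸ h 1, hζ2 ▸ h 2⟩
    · rintro ⟨u1, u2, u3⟩ k
      fin_cases k
      · rw [show ζ ⟨0, by norm_num⟩ = ζ 0 from rfl, hζ0]; exact u1
      · rw [show ζ ⟨1, by norm_num⟩ = ζ 1 from rfl, hζ1]; exact u2
      · rw [show ζ ⟨2, by norm_num⟩ = ζ 2 from rfl, hζ2]; exact u3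
  have hf : ∀ y : ℂ, y ≠ 1 → y ≠ ω → y ≠ ω ^ 2 →
      f y = y - (((starRingEnd ℂ) (y - 1))⁻¹ + ((starRingEnd ℂ) (y - ω))⁻¹
        + ((starRingEnd ℂ) (y - ω ^ 2))⁻¹) := by
    intro y hy1 hy2 hy3
    show y - ∑ k : Fin 3, (y - ζ k) / (‖y - ζ k‖ : ℂ) ^ 2 = _
    rw [Fin.sum_univ_three, hζ0, hζ1, hζ2,
      term_eq (sub_ne_zero.2 hy1), term_eq (sub_ne_zero.2 hy2), term_eq (sub_ne_zero.2 hy3)]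
  -- conjugation of points
  have hcu : ∀ m : Fin 3, (starRingEnd ℂ) (ω ^ (m : ℕ)) = (ω ^ (m : ℕ)) ^ 2 :=
    fun m => hconj_cube (hu3' m)
  have econj : ∀ (m : Fin 3) (i : Fin 3),
      ((starRingEnd ℂ) (F (m, i) - 1) = (ω ^ (m:ℕ)) ^ 2 * (r i : ℝ) - 1) ∧
      ((starRingEnd ℂ) (F (m, i) - ω) = (ω ^ (m:ℕ)) ^ 2 * (r i : ℝ) - ω ^ 2) ∧
      ((starRingEnd ℂ) (F (m, i) - ω ^ 2) = (ω ^ (m:ℕ)) ^ 2 * (r i : ℝ) - ω) := by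
    intro m i
    refine ⟨?_, ?_, ?_⟩ <;>
      simp only [hFdef, map_sub, map_mul, map_one, hcu m, Complex.conj_ofReal, hconj, hconj2]
  -- non-coincidence with the masses
  have hFne : ∀ (m i : Fin 3), F (m, i) ≠ 1 ∧ F (m, i) ≠ ω ∧ F (m, i) ≠ ω ^ 2 := by
    intro m i
    refine ⟨ux_ne _ _ (hu3' m) (hrf i).2.1 (one_pow 3),
      ux_ne _ _ (hu3' m) (hrf i).2.1 hω3,
      ux_ne _ _ (hu3' m) (hrf i).2.1 (by linear_combination (ω ^ 3 + 1) * hω3)⟩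
  -- the set equality
  have hSeq : S = insert 0 (Set.range F) := by
    apply Set.ext; intro z
    simp only [Set.mem_insert_iff, Set.mem_range]
    constructor
    · rintro ⟨hzne, hfz⟩
      obtain ⟨hz1, hz2, hz3⟩ := (hne_iff z).1 hzne
      rw [hf z hz1 hz2 hz3] at hfz
      by_cases hz0 : z = 0
      · exact Or.inl hz0
      right
      obtain ⟨v, y, hv3, hy3, hzy⟩ := backward hz1 hz2 hz3 hz0 hfz
      have hm : ∃ m : Fin 3, v ^ 2 = ω ^ (m : ℕ) := by
        rcases cube_eq hv3 with hv | hv | hv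
        · exact ⟨0, by rw [hv, show ((0:Fin 3):ℕ) = 0 from rfl, pow_zero, one_pow]⟩
        · exact ⟨2, by rw [hv, show ((2:Fin 3):ℕ) = 2 from rfl]⟩
        · exact ⟨1, by rw [hv, show ((1:Fin 3):ℕ) = 1 from rfl, pow_one]; linear_combination ω * hω3⟩
      have hi : ∃ i : Fin 3, ((r i : ℝ) : ℂ) = y := by
        rcases cubic_roots ha3 hb3 hc3 hab hac hbc hy3 with hy | hy | hy
        · exact ⟨0, by rw [hy]; rfl⟩
        · exact ⟨1, by rw [hy]; rfl⟩
        · exact ⟨2, by rw [hy]; rfl⟩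
      obtain ⟨m, hm⟩ := hm
      obtain ⟨i, hi⟩ := hi
      exact ⟨(m, i), by simp only [hFdef]; rw [hi, ← hm, hzy]⟩
    · rintro (rfl | ⟨⟨m, i⟩, rfl⟩)
      · refine ⟨(hne_iff 0).2 ⟨by norm_num, fun h => hωne0 h.symm,
          fun h => (pow_ne_zero 2 hωne0) h.symm⟩, ?_⟩
        rw [hf 0 (by norm_num) (fun h => hωne0 h.symm) (fun h => (pow_ne_zero 2 hωne0) h.symm)]
        exact sol0
      · obtain ⟨hn1, hn2, hn3⟩ := hFne m i
        refine ⟨(hne_iff _).2 ⟨hn1, hn2, hn3⟩, ?_⟩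
        rw [hf _ hn1 hn2 hn3]
        obtain ⟨e1, e2, e3⟩ := econj m i
        rw [e1, e2, e3]
        show (F (m, i) : ℂ) - _ = 0
        simp only [hFdef]
        exact sol_val _ _ (hu3' m) (hr3C i) (hrf i).1 (hrf i).2.1
  have h0F : (0 : ℂ) ∉ Set.range F := by
    rintro ⟨⟨m, i⟩, h⟩
    simp only [hFdef] at h
    rcases mul_eq_zero.1 h with h | h
    · exact pow_ne_zero _ hωne0 h
    · exact (hrf i).1 (by exact_mod_cast h)
  have hfinR : (Set.range F).Finite := Set.finite_range F
  refine ⟨?_, ?_, ?_⟩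
  · rw [hSeq]; exact hfinR.insert 0
  · rw [hSeq, Set.ncard_insert_of_notMem h0F hfinR, ← Set.image_univ,
      Set.ncard_image_of_injective _ hFinj, Set.ncard_univ]
    simp [Nat.card_eq_fintype_card]
  · intro z hz
    rw [hSeq] at hz
    rcases hz with rfl | ⟨⟨m, i⟩, rfl⟩
    · have hne1 : (0 : ℂ) ≠ 1 := by norm_num
      have hne2 : (0 : ℂ) ≠ ω := fun h => hωne0 h.symm
      have hne3 : (0 : ℂ) ≠ ω ^ 2 := fun h => (pow_ne_zero 2 hωne0) h.symm
      have hcne : 1 - Complex.normSq 0 ≠ 0 := by simp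
      refine ⟨lensCLE 0 hcne, ?_⟩
      have hd := sum_hasFDerivAt 0 0 hne1 hne2 hne3 hcne (by linear_combination c0)
      apply hd.congr_of_eventuallyEq
      filter_upwards [eventually_ne_nhds hne1, eventually_ne_nhds hne2,
        eventually_ne_nhds hne3] with y h1 h2 h3
      rw [hf y h1 h2 h3]
    · obtain ⟨hn1, hn2, hn3⟩ := hFne m i
      set x : ℝ := r i with hxdef
      set u : ℂ := ω ^ (m : ℕ) with hudef
      set cc : ℂ := -(u ^ 2 * ((x : ℂ) ^ 2 - 2)) with hccdef
      have hnu : Complex.normSq u = 1 := by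
        have h1 : ‖u‖ = 1 := by rw [hudef]; exact habs1 (hu3' m)
        rw [← Complex.sq_norm, h1]; norm_num
      have hcne : 1 - Complex.normSq cc ≠ 0 := by
        have hxC : ((x : ℂ) ^ 2 - 2) = ((x ^ 2 - 2 : ℝ) : ℂ) := by push_cast; ring
        rw [hccdef, hxC, Complex.normSq_neg, Complex.normSq_mul, map_pow, hnu,
          one_pow, one_mul, Complex.normSq_ofReal]
        intro h
        apply (hrf i).2.2
        nlinarith [h]
      refine ⟨lensCLE cc hcne, ?_⟩
      obtain ⟨e1, e2, e3⟩ := econj m i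
      rw [← hudef, ← hxdef] at e1 e2 e3
      have hceq : cc = -(((starRingEnd ℂ) (F (m, i) - 1)) ^ 2)⁻¹
          - (((starRingEnd ℂ) (F (m, i) - ω)) ^ 2)⁻¹
          - (((starRingEnd ℂ) (F (m, i) - ω ^ 2)) ^ 2)⁻¹ := by
        rw [e1, e2, e3, hccdef]
        linear_combination c_val u x (hu3' m) (hr3C i) (hrf i).1 (hrf i).2.1
      have hd := sum_hasFDerivAt (F (m, i)) cc hn1 hn2 hn3 hcne hceq
      apply hd.congr_of_eventuallyEq
      filter_upwards [eventually_ne_nhds hn1, eventually_ne_nhds hn2,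
        eventually_ne_nhds hn3] with y h1 h2 h3
      rw [hf y h1 h2 h3]
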